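/- In Matsumoto's presentation of K_2(F), the symbol is antisymmetric: {a, b}·{b, a} = 1 for all a, b ∈ F*. -/

import Mathlib

open TensorProduct

/-- The Steinberg subgroup of `F* ⊗ F*`: generated by the elements `y ⊗ (1-y)`,
`y ≠ 0, 1`. The quotient is `K₂(F)` by Matsumoto's theorem. -/
noncomputable def steinbergSubgroup (F : Type*) [Field F] :
    AddSubgroup (Additive Fˣ ⊗[ℤ] Additive Fˣ) :=
  AddSubgroup.closure
    {t | ∃ (y : F) (hy : y ≠ 0) (hy1 : 1 - y ≠ 0),
      t = Additive.ofMul (Units.mk0 y hy) ⊗ₜ[ℤ] Additive.ofMul (Units.mk0 (1 - y) hy1)}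

lemma tmul_neg_self_mem (F : Type*) [Field F] (a : Fˣ) :
    Additive.ofMul a ⊗ₜ[ℤ] Additive.ofMul (-a) ∈ steinbergSubgroup F := by
  by_cases ha : a = 1
  · subst ha
    simp only [ofMul_one, zero_tmul]
    exact zero_mem _
  · have hy : (a : F) ≠ 0 := a.ne_zero
    have hy1 : 1 - (a : F) ≠ 0 := by
      intro h
      exact ha (Units.ext (sub_eq_zero.mp h).symm)
    have hyi : ((a : F))⁻¹ ≠ 0 := inv_ne_zero hy
    have hy1i : 1 - ((a : F))⁻¹ ≠ 0 := by
      intro h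
      have : ((a:F))⁻¹ = 1 := (sub_eq_zero.mp h).symm
      exact ha (Units.ext (by field_simp at this; simp [this]))
    have hinv : Units.mk0 ((a : F))⁻¹ hyi = a⁻¹ := Units.ext (by simp)
    have key : Additive.ofMul (-a) =
        Additive.ofMul (Units.mk0 (1 - (a : F)) hy1) +
          (- Additive.ofMul (Units.mk0 (1 - ((a : F))⁻¹) hy1i)) := by
      rw [← ofMul_inv, ← ofMul_mul]
      congr 1
      have hne : -1 + (a : F) ≠ 0 := fun h => hy1 (by linear_combination -h)
      ext
      push_cast [Units.val_mk0]
      field_simp [hne]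
      linear_combination mul_inv_cancel₀ hne
    rw [key, tmul_add, tmul_neg, ← neg_tmul, ← ofMul_inv, ← hinv]
    have ha' : Units.mk0 (a : F) hy = a := Units.ext rfl
    refine add_mem
      (AddSubgroup.subset_closure ⟨(a : F), hy, hy1, ?_⟩)
      (AddSubgroup.subset_closure ⟨((a : F))⁻¹, hyi, hy1i, rfl⟩)
    rw [ha']

/-- Antisymmetry of the symbol in Matsumoto's presentation of `K₂(F)`:
`{a,b}·{b,a} = 1`, i.e. the class of `a ⊗ b + b ⊗ a` vanishes. -/
theorem K2_symbol_antisymm (F : Type*) [Field F] (a b : Fˣ) :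
    (QuotientAddGroup.mk
        (Additive.ofMul a ⊗ₜ[ℤ] Additive.ofMul b +
          Additive.ofMul b ⊗ₜ[ℤ] Additive.ofMul a) :
      (Additive Fˣ ⊗[ℤ] Additive Fˣ) ⧸ steinbergSubgroup F) = 0 := by
  rw [QuotientAddGroup.eq_zero_iff]
  have hid : Additive.ofMul a ⊗ₜ[ℤ] Additive.ofMul b +
      Additive.ofMul b ⊗ₜ[ℤ] Additive.ofMul a =
      Additive.ofMul (a * b) ⊗ₜ[ℤ] Additive.ofMul (-(a * b)) -
        Additive.ofMul a ⊗ₜ[ℤ] Additive.ofMul (-a) -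
        Additive.ofMul b ⊗ₜ[ℤ] Additive.ofMul (-b) := by
    have h1 : (-(a * b)) = (-a) * b := by ext; push_cast; ring
    have h2 : (-(a * b)) = a * (-b) := by ext; push_cast; ring
    rw [ofMul_mul, add_tmul]
    nth_rewrite 1 [h1]
    nth_rewrite 1 [h2]
    rw [ofMul_mul, ofMul_mul, tmul_add, tmul_add]
    abel
  rw [hid]
  exact sub_mem (sub_mem (tmul_neg_self_mem F (a*b)) (tmul_neg_self_mem F a))
    (tmul_neg_self_mem F b)
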